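/- arXiv:1206.4366 — 2 statements merged into one kernel-verified Lean document; each statement's English description precedes it below -/
import Mathlib

section
/- In the extended SG mechanism with unequal speed functions, strategy-proofness fails: with m = n = 4, all r_i = q_j = 1, agent 1's speed constant 1 on [0,1], agents 2,3,4's speed equal to 1 on [0,1/2], 0 on (1/2,5/6], and 3 on (5/6,1], true preferences (1,2,3,4) for agents 1,2 and (2,4,3,1) for agents 3,4: truthful bidding gives agent 1 the sorted allocation (1/2, 0, 1/2, 0), while bidding (2,1,3,4) gives agent 1 the lexicographically better sorted allocation (1/2, 1/3, 1/6, 0). -/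
open Finset

/-- Agent lexicographic-prefers share `a` to share `b` w.r.t. preference
permutation `π` (where `π ℓ` is the `ℓ`-th most preferred good): the leftmost
nonzero coordinate of the sorted difference is positive. -/
def LexPref {m : ℕ} (π : Equiv.Perm (Fin m)) (a b : Fin m → ℝ) : Prop :=
  ∃ k : Fin m, (∀ l, l < k → a (π l) = b (π l)) ∧ b (π k) < a (π k)

/-- A feasible allocation: nonnegative, row sums `r i`, column sums `q j`. -/
def IsAlloc {n m : ℕ} (q : Fin m → ℝ) (r : Fin n → ℝ)
    (a : Fin n → Fin m → ℝ) : Prop :=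
  (∀ i j, 0 ≤ a i j) ∧ (∀ i, ∑ j, a i j = r i) ∧ (∀ j, ∑ i, a i j = q j)

/-- Time at which agent `i` starts consuming good `j` under bids `σ`, given the
exhaustion times `T`: the latest exhaustion time among goods `i` bids before `j`. -/
def startTime {n m : ℕ} (σ : Fin n → Equiv.Perm (Fin m)) (T : Fin m → ℝ)
    (i : Fin n) (j : Fin m) : ℝ :=
  (Finset.univ.filter (fun j' => (σ i).symm j' < (σ i).symm j)).fold max 0 T

/-- The extended SG allocation with speed functions `η` and exhaustion times
`T` under bids `σ`: each agent consumes her most-preferred unexhausted good at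
time-varying rate `η i t` from time 0 to time 1; good `j` is exhausted at time
`T j`. -/
def IsExtSGAllocT {n m : ℕ} (q : Fin m → ℝ) (η : Fin n → ℝ → ℝ)
    (σ : Fin n → Equiv.Perm (Fin m)) (T : Fin m → ℝ)
    (a : Fin n → Fin m → ℝ) : Prop :=
  (∀ j, 0 ≤ T j ∧ T j ≤ 1) ∧
  (∀ i j, a i j = ∫ t in (min (startTime σ T i j) (T j))..(T j), η i t) ∧
  (∀ j, ∑ i, a i j = q j)

/-- `a` is produced by the extended SG mechanism with speeds `η` under bids `σ`. -/
def IsExtSGAlloc {n m : ℕ} (q : Fin m → ℝ) (η : Fin n → ℝ → ℝ)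
    (σ : Fin n → Equiv.Perm (Fin m)) (a : Fin n → Fin m → ℝ) : Prop :=
  ∃ T, IsExtSGAllocT q η σ T a

/-- Preference list `(2,4,3,1)` (0-indexed `(1,3,2,0)`). -/
def perm34 : Equiv.Perm (Fin 4) :=
  ⟨![1, 3, 2, 0], ![3, 0, 2, 1], by decide, by decide⟩

/-- The speed functions: agent 1 at constant speed 1; agents 2,3,4 at speed 1
on `[0,1/2]`, 0 on `(1/2,5/6]`, and 3 on `(5/6,1]`. -/
noncomputable def speeds : Fin 4 → ℝ → ℝ := fun i t =>
  if i = 0 then 1 else if t ≤ 1 / 2 then 1 else if t ≤ 5 / 6 then 0 else 3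


open MeasureTheory in
noncomputable def Hc : ℝ → ℝ := fun x =>
  if x ≤ 1/2 then x else if x ≤ 5/6 then 1/2 else 3*x - 2

lemma Hc_mono : Monotone Hc := by
  intro a b hab; simp only [Hc]; split_ifs <;> linarith

lemma Hc_zero : Hc 0 = 0 := by norm_num [Hc]
lemma Hc_half : Hc (1/2) = 1/2 := by norm_num [Hc]
lemma Hc_third : Hc (1/3) = 1/3 := by norm_num [Hc]
lemma Hc_56 : Hc (5/6) = 1/2 := by norm_num [Hc]
lemma Hc_1718 : Hc (17/18) = 5/6 := by norm_num [Hc]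

open MeasureTheory in
lemma intOn {f : ℝ → ℝ} {a b c : ℝ} (hab : a ≤ b)
    (h : ∀ t ∈ Set.Ioc a b, f t = c) :
    IntervalIntegrable f volume a b ∧ (∫ t in a..b, f t) = c * (b - a) := by
  constructor
  · rw [intervalIntegrable_iff_integrableOn_Ioc_of_le hab]
    have hae : f =ᵐ[volume.restrict (Set.Ioc a b)] (fun _ => c) :=
      (ae_restrict_iff' measurableSet_Ioc).2 (Filter.Eventually.of_forall h)
    exact (integrableOn_const measure_Ioc_lt_top.ne).congr hae.symm
  · rw [intervalIntegral.integral_congr_ae (g := fun _ => c)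
      (Filter.Eventually.of_forall (fun x hx => h x (by rwa [Set.uIoc_of_le hab] at hx))),
      intervalIntegral.integral_const, smul_eq_mul]
    ring

lemma speeds0_integral (a b : ℝ) : ∫ t in a..b, speeds 0 t = b - a := by
  simp [speeds]

lemma speeds_integral {i : Fin 4} (hi : i ≠ 0) {a b : ℝ} (hab : a ≤ b) :
    ∫ t in a..b, speeds i t = Hc b - Hc a := by
  set c1 := max a (min b (1/2)) with hc1
  set c2 := max a (min b (5/6)) with hc2
  have h1 : a ≤ c1 := le_max_left _ _
  have h12 : c1 ≤ c2 := max_le_max le_rfl (min_le_min le_rfl (by norm_num))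
  have h2b : c2 ≤ b := max_le hab (min_le_left _ _)
  have p1 : ∀ t ∈ Set.Ioc a c1, speeds i t = 1 := by
    intro t ht
    have : t ≤ 1/2 := by
      rcases le_max_iff.1 ht.2 with h | h
      · linarith [ht.1]
      · exact h.trans (min_le_right _ _)
    simp only [speeds, if_neg hi, if_pos this]
  have p2 : ∀ t ∈ Set.Ioc c1 c2, speeds i t = 0 := by
    intro t ht
    have htb : t ≤ min b (5/6) := by
      rcases le_max_iff.1 ht.2 with h | h
      · exact absurd (h.trans (le_max_left a _)) (not_le.2 ht.1)
      · exact h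
    have ht5 : t ≤ 5/6 := htb.trans (min_le_right _ _)
    have ht2 : ¬ t ≤ 1/2 := by
      intro hle
      have : t ≤ c1 := le_max_of_le_right (le_min (htb.trans (min_le_left _ _)) hle)
      exact not_le.2 ht.1 this
    simp only [speeds, if_neg hi, if_neg ht2, if_pos ht5]
  have p3 : ∀ t ∈ Set.Ioc c2 b, speeds i t = 3 := by
    intro t ht
    have h5 : ¬ t ≤ 5/6 := by
      intro hle
      have : t ≤ c2 := le_max_of_le_right (le_min ht.2 hle)
      exact not_le.2 ht.1 this
    have h2 : ¬ t ≤ 1/2 := fun hle => h5 (by linarith)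
    simp only [speeds, if_neg hi, if_neg h2, if_neg h5]
  obtain ⟨int1, val1⟩ := intOn h1 p1
  obtain ⟨int2, val2⟩ := intOn h12 p2
  obtain ⟨int3, val3⟩ := intOn h2b p3
  have sum1 := intervalIntegral.integral_add_adjacent_intervals int1 int2
  have sum2 := intervalIntegral.integral_add_adjacent_intervals (int1.trans int2) int3
  rw [← sum2, ← sum1, val1, val2, val3, hc1, hc2]
  simp only [Hc, min_def, max_def]
  split_ifs <;> linarith

lemma fold1 (T : Fin 4 → ℝ) (h : ∀ j, 0 ≤ T j) (a : Fin 4) :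
    ({a} : Finset (Fin 4)).fold max 0 T = T a := by
  rw [Finset.fold_singleton]; exact max_eq_left (h a)

lemma fold2 (T : Fin 4 → ℝ) (h : ∀ j, 0 ≤ T j) (a b : Fin 4)
    (hab : a ∉ ({b} : Finset (Fin 4))) :
    ({a, b} : Finset (Fin 4)).fold max 0 T = max (T a) (T b) := by
  rw [show ({a, b} : Finset (Fin 4)) = insert a {b} from rfl,
    Finset.fold_insert hab, fold1 T h]

lemma fold3 (T : Fin 4 → ℝ) (h : ∀ j, 0 ≤ T j) (a b c : Fin 4)
    (hab : a ∉ ({b, c} : Finset (Fin 4))) (hbc : b ∉ ({c} : Finset (Fin 4))) :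
    ({a, b, c} : Finset (Fin 4)).fold max 0 T = max (T a) (max (T b) (T c)) := by
  rw [show ({a, b, c} : Finset (Fin 4)) = insert a {b, c} from rfl,
    Finset.fold_insert hab, fold2 T h b c hbc]

set_option maxHeartbeats 2000000 in
/-- Strategy-proofness fails for the extended SG mechanism with unequal speed
functions: with the above speeds, all `r_i = q_j = 1`, true preferences
`(1,2,3,4)` for agents 1,2 and `(2,4,3,1)` for agents 3,4, truthful bidding
gives agent 1 the sorted allocation `(1/2, 0, 1/2, 0)`, while bidding
`(2,1,3,4)` gives her the lexicographically better `(1/2, 1/3, 1/6, 0)`. -/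
theorem extSG_not_strategyproof
    (aπ aσ : Fin 4 → Fin 4 → ℝ)
    (hAπ : IsAlloc (fun _ => 1) (fun _ => 1) aπ)
    (hπ : IsExtSGAlloc (fun _ => 1) speeds
      ![Equiv.refl (Fin 4), Equiv.refl (Fin 4), perm34, perm34] aπ)
    (hAσ : IsAlloc (fun _ => 1) (fun _ => 1) aσ)
    (hσ : IsExtSGAlloc (fun _ => 1) speeds
      ![Equiv.swap 0 1, Equiv.refl (Fin 4), perm34, perm34] aσ) :
    (∀ l, aπ 0 (Equiv.refl (Fin 4) l) = (![1/2, 0, 1/2, 0] : Fin 4 → ℝ) l) ∧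
    (∀ l, aσ 0 (Equiv.refl (Fin 4) l) = (![1/2, 1/3, 1/6, 0] : Fin 4 → ℝ) l) ∧
    LexPref (Equiv.refl (Fin 4)) (aσ 0) (aπ 0) := by
  obtain ⟨T, hTbd, haT, hcolT⟩ := hπ
  obtain ⟨S, hSbd, haS, hcolS⟩ := hσ
  have hT0 : ∀ j, (0:ℝ) ≤ T j := fun j => (hTbd j).1
  have hT1le : ∀ j, T j ≤ 1 := fun j => (hTbd j).2
  have hS0 : ∀ j, (0:ℝ) ≤ S j := fun j => (hSbd j).1
  have hS1le : ∀ j, S j ≤ 1 := fun j => (hSbd j).2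
  have sp00 : startTime ![Equiv.refl (Fin 4), Equiv.refl (Fin 4), perm34, perm34] T 0 0 = 0 := by
    rw [startTime, show (Finset.univ.filter (fun j' =>
      ((![Equiv.refl (Fin 4), Equiv.refl (Fin 4), perm34, perm34] : Fin 4 → Equiv.Perm (Fin 4)) 0).symm j' < ((![Equiv.refl (Fin 4), Equiv.refl (Fin 4), perm34, perm34] : Fin 4 → Equiv.Perm (Fin 4)) 0).symm 0)) = (∅ : Finset (Fin 4)) from by decide]
    rfl
  have sp01 : startTime ![Equiv.refl (Fin 4), Equiv.refl (Fin 4), perm34, perm34] T 0 1 = T 0 := by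
    rw [startTime, show (Finset.univ.filter (fun j' =>
      ((![Equiv.refl (Fin 4), Equiv.refl (Fin 4), perm34, perm34] : Fin 4 → Equiv.Perm (Fin 4)) 0).symm j' < ((![Equiv.refl (Fin 4), Equiv.refl (Fin 4), perm34, perm34] : Fin 4 → Equiv.Perm (Fin 4)) 0).symm 1)) = ({0} : Finset (Fin 4)) from by decide]
    exact fold1 T hT0 0
  have sp02 : startTime ![Equiv.refl (Fin 4), Equiv.refl (Fin 4), perm34, perm34] T 0 2 = max (T 0) (T 1) := by
    rw [startTime, show (Finset.univ.filter (fun j' =>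
      ((![Equiv.refl (Fin 4), Equiv.refl (Fin 4), perm34, perm34] : Fin 4 → Equiv.Perm (Fin 4)) 0).symm j' < ((![Equiv.refl (Fin 4), Equiv.refl (Fin 4), perm34, perm34] : Fin 4 → Equiv.Perm (Fin 4)) 0).symm 2)) = ({0, 1} : Finset (Fin 4)) from by decide]
    exact fold2 T hT0 0 1 (by decide)
  have sp03 : startTime ![Equiv.refl (Fin 4), Equiv.refl (Fin 4), perm34, perm34] T 0 3 = max (T 0) (max (T 1) (T 2)) := by
    rw [startTime, show (Finset.univ.filter (fun j' =>
      ((![Equiv.refl (Fin 4), Equiv.refl (Fin 4), perm34, perm34] : Fin 4 → Equiv.Perm (Fin 4)) 0).symm j' < ((![Equiv.refl (Fin 4), Equiv.refl (Fin 4), perm34, perm34] : Fin 4 → Equiv.Perm (Fin 4)) 0).symm 3)) = ({0, 1, 2} : Finset (Fin 4)) from by decide]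
    exact fold3 T hT0 0 1 2 (by decide) (by decide)
  have sp10 : startTime ![Equiv.refl (Fin 4), Equiv.refl (Fin 4), perm34, perm34] T 1 0 = 0 := by
    rw [startTime, show (Finset.univ.filter (fun j' =>
      ((![Equiv.refl (Fin 4), Equiv.refl (Fin 4), perm34, perm34] : Fin 4 → Equiv.Perm (Fin 4)) 1).symm j' < ((![Equiv.refl (Fin 4), Equiv.refl (Fin 4), perm34, perm34] : Fin 4 → Equiv.Perm (Fin 4)) 1).symm 0)) = (∅ : Finset (Fin 4)) from by decide]
    rfl
  have sp11 : startTime ![Equiv.refl (Fin 4), Equiv.refl (Fin 4), perm34, perm34] T 1 1 = T 0 := by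
    rw [startTime, show (Finset.univ.filter (fun j' =>
      ((![Equiv.refl (Fin 4), Equiv.refl (Fin 4), perm34, perm34] : Fin 4 → Equiv.Perm (Fin 4)) 1).symm j' < ((![Equiv.refl (Fin 4), Equiv.refl (Fin 4), perm34, perm34] : Fin 4 → Equiv.Perm (Fin 4)) 1).symm 1)) = ({0} : Finset (Fin 4)) from by decide]
    exact fold1 T hT0 0
  have sp12 : startTime ![Equiv.refl (Fin 4), Equiv.refl (Fin 4), perm34, perm34] T 1 2 = max (T 0) (T 1) := by
    rw [startTime, show (Finset.univ.filter (fun j' =>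
      ((![Equiv.refl (Fin 4), Equiv.refl (Fin 4), perm34, perm34] : Fin 4 → Equiv.Perm (Fin 4)) 1).symm j' < ((![Equiv.refl (Fin 4), Equiv.refl (Fin 4), perm34, perm34] : Fin 4 → Equiv.Perm (Fin 4)) 1).symm 2)) = ({0, 1} : Finset (Fin 4)) from by decide]
    exact fold2 T hT0 0 1 (by decide)
  have sp13 : startTime ![Equiv.refl (Fin 4), Equiv.refl (Fin 4), perm34, perm34] T 1 3 = max (T 0) (max (T 1) (T 2)) := by
    rw [startTime, show (Finset.univ.filter (fun j' =>
      ((![Equiv.refl (Fin 4), Equiv.refl (Fin 4), perm34, perm34] : Fin 4 → Equiv.Perm (Fin 4)) 1).symm j' < ((![Equiv.refl (Fin 4), Equiv.refl (Fin 4), perm34, perm34] : Fin 4 → Equiv.Perm (Fin 4)) 1).symm 3)) = ({0, 1, 2} : Finset (Fin 4)) from by decide]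
    exact fold3 T hT0 0 1 2 (by decide) (by decide)
  have sp20 : startTime ![Equiv.refl (Fin 4), Equiv.refl (Fin 4), perm34, perm34] T 2 0 = max (T 1) (max (T 2) (T 3)) := by
    rw [startTime, show (Finset.univ.filter (fun j' =>
      ((![Equiv.refl (Fin 4), Equiv.refl (Fin 4), perm34, perm34] : Fin 4 → Equiv.Perm (Fin 4)) 2).symm j' < ((![Equiv.refl (Fin 4), Equiv.refl (Fin 4), perm34, perm34] : Fin 4 → Equiv.Perm (Fin 4)) 2).symm 0)) = ({1, 2, 3} : Finset (Fin 4)) from by decide]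
    exact fold3 T hT0 1 2 3 (by decide) (by decide)
  have sp21 : startTime ![Equiv.refl (Fin 4), Equiv.refl (Fin 4), perm34, perm34] T 2 1 = 0 := by
    rw [startTime, show (Finset.univ.filter (fun j' =>
      ((![Equiv.refl (Fin 4), Equiv.refl (Fin 4), perm34, perm34] : Fin 4 → Equiv.Perm (Fin 4)) 2).symm j' < ((![Equiv.refl (Fin 4), Equiv.refl (Fin 4), perm34, perm34] : Fin 4 → Equiv.Perm (Fin 4)) 2).symm 1)) = (∅ : Finset (Fin 4)) from by decide]
    rfl
  have sp22 : startTime ![Equiv.refl (Fin 4), Equiv.refl (Fin 4), perm34, perm34] T 2 2 = max (T 1) (T 3) := by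
    rw [startTime, show (Finset.univ.filter (fun j' =>
      ((![Equiv.refl (Fin 4), Equiv.refl (Fin 4), perm34, perm34] : Fin 4 → Equiv.Perm (Fin 4)) 2).symm j' < ((![Equiv.refl (Fin 4), Equiv.refl (Fin 4), perm34, perm34] : Fin 4 → Equiv.Perm (Fin 4)) 2).symm 2)) = ({1, 3} : Finset (Fin 4)) from by decide]
    exact fold2 T hT0 1 3 (by decide)
  have sp23 : startTime ![Equiv.refl (Fin 4), Equiv.refl (Fin 4), perm34, perm34] T 2 3 = T 1 := by
    rw [startTime, show (Finset.univ.filter (fun j' =>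
      ((![Equiv.refl (Fin 4), Equiv.refl (Fin 4), perm34, perm34] : Fin 4 → Equiv.Perm (Fin 4)) 2).symm j' < ((![Equiv.refl (Fin 4), Equiv.refl (Fin 4), perm34, perm34] : Fin 4 → Equiv.Perm (Fin 4)) 2).symm 3)) = ({1} : Finset (Fin 4)) from by decide]
    exact fold1 T hT0 1
  have sp30 : startTime ![Equiv.refl (Fin 4), Equiv.refl (Fin 4), perm34, perm34] T 3 0 = max (T 1) (max (T 2) (T 3)) := by
    rw [startTime, show (Finset.univ.filter (fun j' =>
      ((![Equiv.refl (Fin 4), Equiv.refl (Fin 4), perm34, perm34] : Fin 4 → Equiv.Perm (Fin 4)) 3).symm j' < ((![Equiv.refl (Fin 4), Equiv.refl (Fin 4), perm34, perm34] : Fin 4 → Equiv.Perm (Fin 4)) 3).symm 0)) = ({1, 2, 3} : Finset (Fin 4)) from by decide]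
    exact fold3 T hT0 1 2 3 (by decide) (by decide)
  have sp31 : startTime ![Equiv.refl (Fin 4), Equiv.refl (Fin 4), perm34, perm34] T 3 1 = 0 := by
    rw [startTime, show (Finset.univ.filter (fun j' =>
      ((![Equiv.refl (Fin 4), Equiv.refl (Fin 4), perm34, perm34] : Fin 4 → Equiv.Perm (Fin 4)) 3).symm j' < ((![Equiv.refl (Fin 4), Equiv.refl (Fin 4), perm34, perm34] : Fin 4 → Equiv.Perm (Fin 4)) 3).symm 1)) = (∅ : Finset (Fin 4)) from by decide]
    rfl
  have sp32 : startTime ![Equiv.refl (Fin 4), Equiv.refl (Fin 4), perm34, perm34] T 3 2 = max (T 1) (T 3) := by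
    rw [startTime, show (Finset.univ.filter (fun j' =>
      ((![Equiv.refl (Fin 4), Equiv.refl (Fin 4), perm34, perm34] : Fin 4 → Equiv.Perm (Fin 4)) 3).symm j' < ((![Equiv.refl (Fin 4), Equiv.refl (Fin 4), perm34, perm34] : Fin 4 → Equiv.Perm (Fin 4)) 3).symm 2)) = ({1, 3} : Finset (Fin 4)) from by decide]
    exact fold2 T hT0 1 3 (by decide)
  have sp33 : startTime ![Equiv.refl (Fin 4), Equiv.refl (Fin 4), perm34, perm34] T 3 3 = T 1 := by
    rw [startTime, show (Finset.univ.filter (fun j' =>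
      ((![Equiv.refl (Fin 4), Equiv.refl (Fin 4), perm34, perm34] : Fin 4 → Equiv.Perm (Fin 4)) 3).symm j' < ((![Equiv.refl (Fin 4), Equiv.refl (Fin 4), perm34, perm34] : Fin 4 → Equiv.Perm (Fin 4)) 3).symm 3)) = ({1} : Finset (Fin 4)) from by decide]
    exact fold1 T hT0 1
  have sq00 : startTime ![Equiv.swap 0 1, Equiv.refl (Fin 4), perm34, perm34] S 0 0 = S 1 := by
    rw [startTime, show (Finset.univ.filter (fun j' =>
      ((![Equiv.swap 0 1, Equiv.refl (Fin 4), perm34, perm34] : Fin 4 → Equiv.Perm (Fin 4)) 0).symm j' < ((![Equiv.swap 0 1, Equiv.refl (Fin 4), perm34, perm34] : Fin 4 → Equiv.Perm (Fin 4)) 0).symm 0)) = ({1} : Finset (Fin 4)) from by decide]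
    exact fold1 S hS0 1
  have sq01 : startTime ![Equiv.swap 0 1, Equiv.refl (Fin 4), perm34, perm34] S 0 1 = 0 := by
    rw [startTime, show (Finset.univ.filter (fun j' =>
      ((![Equiv.swap 0 1, Equiv.refl (Fin 4), perm34, perm34] : Fin 4 → Equiv.Perm (Fin 4)) 0).symm j' < ((![Equiv.swap 0 1, Equiv.refl (Fin 4), perm34, perm34] : Fin 4 → Equiv.Perm (Fin 4)) 0).symm 1)) = (∅ : Finset (Fin 4)) from by decide]
    rfl
  have sq02 : startTime ![Equiv.swap 0 1, Equiv.refl (Fin 4), perm34, perm34] S 0 2 = max (S 0) (S 1) := by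
    rw [startTime, show (Finset.univ.filter (fun j' =>
      ((![Equiv.swap 0 1, Equiv.refl (Fin 4), perm34, perm34] : Fin 4 → Equiv.Perm (Fin 4)) 0).symm j' < ((![Equiv.swap 0 1, Equiv.refl (Fin 4), perm34, perm34] : Fin 4 → Equiv.Perm (Fin 4)) 0).symm 2)) = ({0, 1} : Finset (Fin 4)) from by decide]
    exact fold2 S hS0 0 1 (by decide)
  have sq03 : startTime ![Equiv.swap 0 1, Equiv.refl (Fin 4), perm34, perm34] S 0 3 = max (S 0) (max (S 1) (S 2)) := by
    rw [startTime, show (Finset.univ.filter (fun j' =>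
      ((![Equiv.swap 0 1, Equiv.refl (Fin 4), perm34, perm34] : Fin 4 → Equiv.Perm (Fin 4)) 0).symm j' < ((![Equiv.swap 0 1, Equiv.refl (Fin 4), perm34, perm34] : Fin 4 → Equiv.Perm (Fin 4)) 0).symm 3)) = ({0, 1, 2} : Finset (Fin 4)) from by decide]
    exact fold3 S hS0 0 1 2 (by decide) (by decide)
  have sq10 : startTime ![Equiv.swap 0 1, Equiv.refl (Fin 4), perm34, perm34] S 1 0 = 0 := by
    rw [startTime, show (Finset.univ.filter (fun j' =>
      ((![Equiv.swap 0 1, Equiv.refl (Fin 4), perm34, perm34] : Fin 4 → Equiv.Perm (Fin 4)) 1).symm j' < ((![Equiv.swap 0 1, Equiv.refl (Fin 4), perm34, perm34] : Fin 4 → Equiv.Perm (Fin 4)) 1).symm 0)) = (∅ : Finset (Fin 4)) from by decide]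
    rfl
  have sq11 : startTime ![Equiv.swap 0 1, Equiv.refl (Fin 4), perm34, perm34] S 1 1 = S 0 := by
    rw [startTime, show (Finset.univ.filter (fun j' =>
      ((![Equiv.swap 0 1, Equiv.refl (Fin 4), perm34, perm34] : Fin 4 → Equiv.Perm (Fin 4)) 1).symm j' < ((![Equiv.swap 0 1, Equiv.refl (Fin 4), perm34, perm34] : Fin 4 → Equiv.Perm (Fin 4)) 1).symm 1)) = ({0} : Finset (Fin 4)) from by decide]
    exact fold1 S hS0 0
  have sq12 : startTime ![Equiv.swap 0 1, Equiv.refl (Fin 4), perm34, perm34] S 1 2 = max (S 0) (S 1) := by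
    rw [startTime, show (Finset.univ.filter (fun j' =>
      ((![Equiv.swap 0 1, Equiv.refl (Fin 4), perm34, perm34] : Fin 4 → Equiv.Perm (Fin 4)) 1).symm j' < ((![Equiv.swap 0 1, Equiv.refl (Fin 4), perm34, perm34] : Fin 4 → Equiv.Perm (Fin 4)) 1).symm 2)) = ({0, 1} : Finset (Fin 4)) from by decide]
    exact fold2 S hS0 0 1 (by decide)
  have sq13 : startTime ![Equiv.swap 0 1, Equiv.refl (Fin 4), perm34, perm34] S 1 3 = max (S 0) (max (S 1) (S 2)) := by
    rw [startTime, show (Finset.univ.filter (fun j' =>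
      ((![Equiv.swap 0 1, Equiv.refl (Fin 4), perm34, perm34] : Fin 4 → Equiv.Perm (Fin 4)) 1).symm j' < ((![Equiv.swap 0 1, Equiv.refl (Fin 4), perm34, perm34] : Fin 4 → Equiv.Perm (Fin 4)) 1).symm 3)) = ({0, 1, 2} : Finset (Fin 4)) from by decide]
    exact fold3 S hS0 0 1 2 (by decide) (by decide)
  have sq20 : startTime ![Equiv.swap 0 1, Equiv.refl (Fin 4), perm34, perm34] S 2 0 = max (S 1) (max (S 2) (S 3)) := by
    rw [startTime, show (Finset.univ.filter (fun j' =>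
      ((![Equiv.swap 0 1, Equiv.refl (Fin 4), perm34, perm34] : Fin 4 → Equiv.Perm (Fin 4)) 2).symm j' < ((![Equiv.swap 0 1, Equiv.refl (Fin 4), perm34, perm34] : Fin 4 → Equiv.Perm (Fin 4)) 2).symm 0)) = ({1, 2, 3} : Finset (Fin 4)) from by decide]
    exact fold3 S hS0 1 2 3 (by decide) (by decide)
  have sq21 : startTime ![Equiv.swap 0 1, Equiv.refl (Fin 4), perm34, perm34] S 2 1 = 0 := by
    rw [startTime, show (Finset.univ.filter (fun j' =>
      ((![Equiv.swap 0 1, Equiv.refl (Fin 4), perm34, perm34] : Fin 4 → Equiv.Perm (Fin 4)) 2).symm j' < ((![Equiv.swap 0 1, Equiv.refl (Fin 4), perm34, perm34] : Fin 4 → Equiv.Perm (Fin 4)) 2).symm 1)) = (∅ : Finset (Fin 4)) from by decide]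
    rfl
  have sq22 : startTime ![Equiv.swap 0 1, Equiv.refl (Fin 4), perm34, perm34] S 2 2 = max (S 1) (S 3) := by
    rw [startTime, show (Finset.univ.filter (fun j' =>
      ((![Equiv.swap 0 1, Equiv.refl (Fin 4), perm34, perm34] : Fin 4 → Equiv.Perm (Fin 4)) 2).symm j' < ((![Equiv.swap 0 1, Equiv.refl (Fin 4), perm34, perm34] : Fin 4 → Equiv.Perm (Fin 4)) 2).symm 2)) = ({1, 3} : Finset (Fin 4)) from by decide]
    exact fold2 S hS0 1 3 (by decide)
  have sq23 : startTime ![Equiv.swap 0 1, Equiv.refl (Fin 4), perm34, perm34] S 2 3 = S 1 := by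
    rw [startTime, show (Finset.univ.filter (fun j' =>
      ((![Equiv.swap 0 1, Equiv.refl (Fin 4), perm34, perm34] : Fin 4 → Equiv.Perm (Fin 4)) 2).symm j' < ((![Equiv.swap 0 1, Equiv.refl (Fin 4), perm34, perm34] : Fin 4 → Equiv.Perm (Fin 4)) 2).symm 3)) = ({1} : Finset (Fin 4)) from by decide]
    exact fold1 S hS0 1
  have sq30 : startTime ![Equiv.swap 0 1, Equiv.refl (Fin 4), perm34, perm34] S 3 0 = max (S 1) (max (S 2) (S 3)) := by
    rw [startTime, show (Finset.univ.filter (fun j' =>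
      ((![Equiv.swap 0 1, Equiv.refl (Fin 4), perm34, perm34] : Fin 4 → Equiv.Perm (Fin 4)) 3).symm j' < ((![Equiv.swap 0 1, Equiv.refl (Fin 4), perm34, perm34] : Fin 4 → Equiv.Perm (Fin 4)) 3).symm 0)) = ({1, 2, 3} : Finset (Fin 4)) from by decide]
    exact fold3 S hS0 1 2 3 (by decide) (by decide)
  have sq31 : startTime ![Equiv.swap 0 1, Equiv.refl (Fin 4), perm34, perm34] S 3 1 = 0 := by
    rw [startTime, show (Finset.univ.filter (fun j' =>
      ((![Equiv.swap 0 1, Equiv.refl (Fin 4), perm34, perm34] : Fin 4 → Equiv.Perm (Fin 4)) 3).symm j' < ((![Equiv.swap 0 1, Equiv.refl (Fin 4), perm34, perm34] : Fin 4 → Equiv.Perm (Fin 4)) 3).symm 1)) = (∅ : Finset (Fin 4)) from by decide]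
    rfl
  have sq32 : startTime ![Equiv.swap 0 1, Equiv.refl (Fin 4), perm34, perm34] S 3 2 = max (S 1) (S 3) := by
    rw [startTime, show (Finset.univ.filter (fun j' =>
      ((![Equiv.swap 0 1, Equiv.refl (Fin 4), perm34, perm34] : Fin 4 → Equiv.Perm (Fin 4)) 3).symm j' < ((![Equiv.swap 0 1, Equiv.refl (Fin 4), perm34, perm34] : Fin 4 → Equiv.Perm (Fin 4)) 3).symm 2)) = ({1, 3} : Finset (Fin 4)) from by decide]
    exact fold2 S hS0 1 3 (by decide)
  have sq33 : startTime ![Equiv.swap 0 1, Equiv.refl (Fin 4), perm34, perm34] S 3 3 = S 1 := by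
    rw [startTime, show (Finset.univ.filter (fun j' =>
      ((![Equiv.swap 0 1, Equiv.refl (Fin 4), perm34, perm34] : Fin 4 → Equiv.Perm (Fin 4)) 3).symm j' < ((![Equiv.swap 0 1, Equiv.refl (Fin 4), perm34, perm34] : Fin 4 → Equiv.Perm (Fin 4)) 3).symm 3)) = ({1} : Finset (Fin 4)) from by decide]
    exact fold1 S hS0 1
  -- truthful equations
  have E0 : (T 0 - 0) + (Hc (T 0) - Hc 0) +
      ((Hc (T 0) - Hc (min (max (T 1) (max (T 2) (T 3))) (T 0)))
        + (Hc (T 0) - Hc (min (max (T 1) (max (T 2) (T 3))) (T 0)))) = 1 := by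
    have h : ∑ i, aπ i 0 = 1 := hcolT 0
    rw [Fin.sum_univ_four, haT 0 0, haT 1 0, haT 2 0, haT 3 0, sp00, sp10, sp20, sp30,
      min_eq_left (hT0 0),
      speeds0_integral, speeds_integral (by decide) (hT0 0),
      speeds_integral (by decide) (min_le_right _ _),
      speeds_integral (by decide) (min_le_right _ _)] at h
    linarith [h]
  have E1 : (T 1 - min (T 0) (T 1)) + (Hc (T 1) - Hc (min (T 0) (T 1))) +
      ((Hc (T 1) - Hc 0) + (Hc (T 1) - Hc 0)) = 1 := by
    have h : ∑ i, aπ i 1 = 1 := hcolT 1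
    rw [Fin.sum_univ_four, haT 0 1, haT 1 1, haT 2 1, haT 3 1, sp01, sp11, sp21, sp31,
      min_eq_left (hT0 1),
      speeds0_integral, speeds_integral (by decide) (min_le_right _ _),
      speeds_integral (by decide) (hT0 1),
      speeds_integral (by decide) (hT0 1)] at h
    linarith [h]
  have E2 : (T 2 - min (max (T 0) (T 1)) (T 2)) + (Hc (T 2) - Hc (min (max (T 0) (T 1)) (T 2))) +
      ((Hc (T 2) - Hc (min (max (T 1) (T 3)) (T 2)))
        + (Hc (T 2) - Hc (min (max (T 1) (T 3)) (T 2)))) = 1 := by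
    have h : ∑ i, aπ i 2 = 1 := hcolT 2
    rw [Fin.sum_univ_four, haT 0 2, haT 1 2, haT 2 2, haT 3 2, sp02, sp12, sp22, sp32,
      speeds0_integral, speeds_integral (by decide) (min_le_right _ _),
      speeds_integral (by decide) (min_le_right _ _),
      speeds_integral (by decide) (min_le_right _ _)] at h
    linarith [h]
  have E3 : (T 3 - min (max (T 0) (max (T 1) (T 2))) (T 3))
      + (Hc (T 3) - Hc (min (max (T 0) (max (T 1) (T 2))) (T 3))) +
      ((Hc (T 3) - Hc (min (T 1) (T 3))) + (Hc (T 3) - Hc (min (T 1) (T 3)))) = 1 := by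
    have h : ∑ i, aπ i 3 = 1 := hcolT 3
    rw [Fin.sum_univ_four, haT 0 3, haT 1 3, haT 2 3, haT 3 3, sp03, sp13, sp23, sp33,
      speeds0_integral, speeds_integral (by decide) (min_le_right _ _),
      speeds_integral (by decide) (min_le_right _ _),
      speeds_integral (by decide) (min_le_right _ _)] at h
    linarith [h]
  rw [Hc_zero] at E0 E1
  -- Step 1 (truthful): T 0 = 1/2 and T 1 = 1/2
  have hT01 : T 0 = 1/2 ∧ T 1 = 1/2 := by
    rcases le_total (T 1) (T 0) with h10 | h01
    · rw [min_eq_right h10] at E1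
      have HT1 : Hc (T 1) = 1/2 := by linarith
      have h1lb : 1/2 ≤ T 1 := by
        simp only [Hc] at HT1; split_ifs at HT1 <;> linarith
      have hm : Hc (min (max (T 1) (max (T 2) (T 3))) (T 0)) ≤ Hc (T 0) :=
        Hc_mono (min_le_right _ _)
      have hH0 : (1:ℝ)/2 ≤ Hc (T 0) := by rw [← HT1]; exact Hc_mono h10
      have hsum : T 0 + Hc (T 0) = 1 := by linarith
      have h0v : T 0 = 1/2 := by
        simp only [Hc] at hsum; split_ifs at hsum <;> linarith
      exact ⟨h0v, le_antisymm (h0v ▸ h10) h1lb⟩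
    · rw [min_eq_right (h01.trans (le_max_left _ _))] at E0
      have hs : T 0 + Hc (T 0) = 1 := by linarith
      have h0v : T 0 = 1/2 := by
        simp only [Hc] at hs; split_ifs at hs <;> linarith
      have hH0v : Hc (T 0) = 1/2 := by rw [h0v]; exact Hc_half
      have hH1 : 1/2 ≤ Hc (T 1) := hH0v ▸ Hc_mono h01
      rw [min_eq_left h01] at E1
      have h1v : T 1 = 1/2 := by linarith
      exact ⟨h0v, h1v⟩
  obtain ⟨h0v, h1v⟩ := hT01
  rw [h0v, h1v, max_self] at E2
  rw [h0v, h1v, ← max_assoc, max_self] at E3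
  -- Step 2 (truthful): T 2 > 1/2, T 3 > 1/2
  have h2gt : 1/2 < T 2 := by
    by_contra hc; push_neg at hc
    rw [min_eq_right hc, min_eq_right (hc.trans (le_max_left _ _))] at E2
    linarith
  have h3gt : 1/2 < T 3 := by
    by_contra hc; push_neg at hc
    rw [min_eq_right (hc.trans (le_max_left _ _)), min_eq_right hc] at E3
    linarith
  -- Step 3 (truthful): T 2 = 1, T 3 = 1
  have hT23 : T 2 = 1 ∧ T 3 = 1 := by
    rcases le_or_gt (T 3) (T 2) with h32 | h23
    · rw [min_eq_right (h32.trans (le_max_right _ _)), min_eq_left h3gt.le, Hc_half] at E3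
      have HT3 : Hc (T 3) = 1 := by linarith
      have h3v : T 3 = 1 := by
        simp only [Hc] at HT3; split_ifs at HT3 <;> linarith
      exact ⟨le_antisymm (hT1le 2) (h3v ▸ h32), h3v⟩
    · exfalso
      rw [min_eq_right (h23.le.trans (le_max_right _ _)), min_eq_left h2gt.le, Hc_half] at E2
      have hs : T 2 + Hc (T 2) = 2 := by linarith
      have h2v : T 2 = 1 := by
        simp only [Hc] at hs; split_ifs at hs <;> linarith
      linarith [hT1le 3]
  obtain ⟨h2v, h3v⟩ := hT23
  -- truthful agent-0 values
  have a00 : aπ 0 0 = 1/2 := by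
    rw [haT 0 0, sp00, min_eq_left (hT0 0), speeds0_integral, h0v]; norm_num
  have a01 : aπ 0 1 = 0 := by
    rw [haT 0 1, sp01, h0v, h1v, min_self, speeds0_integral]; norm_num
  have a02 : aπ 0 2 = 1/2 := by
    rw [haT 0 2, sp02, h0v, h1v, h2v, max_self,
      min_eq_left (by norm_num : (1:ℝ)/2 ≤ 1), speeds0_integral]
    norm_num
  have a03 : aπ 0 3 = 0 := by
    rw [haT 0 3, sp03,
      min_eq_right (by rw [h2v, h3v]; exact le_max_of_le_right (le_max_right _ _)),
      speeds0_integral]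
    norm_num
  -- manipulated equations
  have F0 : (S 0 - min (S 1) (S 0)) + (Hc (S 0) - Hc 0) +
      ((Hc (S 0) - Hc (min (max (S 1) (max (S 2) (S 3))) (S 0)))
        + (Hc (S 0) - Hc (min (max (S 1) (max (S 2) (S 3))) (S 0)))) = 1 := by
    have h : ∑ i, aσ i 0 = 1 := hcolS 0
    rw [Fin.sum_univ_four, haS 0 0, haS 1 0, haS 2 0, haS 3 0, sq00, sq10, sq20, sq30,
      min_eq_left (hS0 0),
      speeds0_integral, speeds_integral (by decide) (hS0 0),
      speeds_integral (by decide) (min_le_right _ _),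
      speeds_integral (by decide) (min_le_right _ _)] at h
    linarith [h]
  have F1 : (S 1 - 0) + (Hc (S 1) - Hc (min (S 0) (S 1))) +
      ((Hc (S 1) - Hc 0) + (Hc (S 1) - Hc 0)) = 1 := by
    have h : ∑ i, aσ i 1 = 1 := hcolS 1
    rw [Fin.sum_univ_four, haS 0 1, haS 1 1, haS 2 1, haS 3 1, sq01, sq11, sq21, sq31,
      min_eq_left (hS0 1),
      speeds0_integral, speeds_integral (by decide) (min_le_right _ _),
      speeds_integral (by decide) (hS0 1),
      speeds_integral (by decide) (hS0 1)] at h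
    linarith [h]
  have F2 : (S 2 - min (max (S 0) (S 1)) (S 2)) + (Hc (S 2) - Hc (min (max (S 0) (S 1)) (S 2))) +
      ((Hc (S 2) - Hc (min (max (S 1) (S 3)) (S 2)))
        + (Hc (S 2) - Hc (min (max (S 1) (S 3)) (S 2)))) = 1 := by
    have h : ∑ i, aσ i 2 = 1 := hcolS 2
    rw [Fin.sum_univ_four, haS 0 2, haS 1 2, haS 2 2, haS 3 2, sq02, sq12, sq22, sq32,
      speeds0_integral, speeds_integral (by decide) (min_le_right _ _),
      speeds_integral (by decide) (min_le_right _ _),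
      speeds_integral (by decide) (min_le_right _ _)] at h
    linarith [h]
  have F3 : (S 3 - min (max (S 0) (max (S 1) (S 2))) (S 3))
      + (Hc (S 3) - Hc (min (max (S 0) (max (S 1) (S 2))) (S 3))) +
      ((Hc (S 3) - Hc (min (S 1) (S 3))) + (Hc (S 3) - Hc (min (S 1) (S 3)))) = 1 := by
    have h : ∑ i, aσ i 3 = 1 := hcolS 3
    rw [Fin.sum_univ_four, haS 0 3, haS 1 3, haS 2 3, haS 3 3, sq03, sq13, sq23, sq33,
      speeds0_integral, speeds_integral (by decide) (min_le_right _ _),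
      speeds_integral (by decide) (min_le_right _ _),
      speeds_integral (by decide) (min_le_right _ _)] at h
    linarith [h]
  rw [Hc_zero] at F0 F1
  -- Step 1 (manipulated): S 1 = 1/3 and S 1 ≤ S 0
  have hS1 : S 1 ≤ S 0 ∧ S 1 = 1/3 := by
    rcases le_total (S 1) (S 0) with h10 | h01
    · rw [min_eq_right h10] at F1
      have hs : S 1 + 2 * Hc (S 1) = 1 := by linarith
      have h1v : S 1 = 1/3 := by
        simp only [Hc] at hs; split_ifs at hs <;> linarith
      exact ⟨h10, h1v⟩
    · exfalso
      rw [min_eq_right h01, min_eq_right (h01.trans (le_max_left _ _))] at F0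
      have HS0 : Hc (S 0) = 1 := by linarith
      have h0v : S 0 = 1 := by
        simp only [Hc] at HS0; split_ifs at HS0 <;> linarith
      have h1e : S 1 = 1 := le_antisymm (hS1le 1) (h0v ▸ h01)
      rw [h0v, h1e, min_self] at F1
      have hHc1 : Hc (1:ℝ) = 1 := by norm_num [Hc]
      rw [hHc1] at F1
      linarith
  obtain ⟨h10, h1v⟩ := hS1
  rw [h1v] at F0 F2 F3 h10
  rw [min_eq_left h10] at F0
  -- Step 2 (manipulated): S 0 = 5/6
  have h0v : S 0 = 5/6 := by
    rcases le_or_gt (S 0) (max (S 2) (S 3)) with hm | hm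
    · rw [min_eq_right (hm.trans (le_max_right (1/3 : ℝ) _))] at F0
      have hs : S 0 + Hc (S 0) = 4/3 := by linarith
      simp only [Hc] at hs; split_ifs at hs <;> linarith
    · exfalso
      have h2lt : S 2 < S 0 := (le_max_left _ _).trans_lt hm
      have h3lt : S 3 < S 0 := (le_max_right _ _).trans_lt hm
      rw [min_eq_right (h3lt.le.trans (le_max_left _ _))] at F3
      rcases le_total (S 3) (1/3) with h3s | h3s
      · rw [min_eq_right h3s] at F3; linarith
      · rw [min_eq_left h3s, Hc_third] at F3
        have HS3 : Hc (S 3) = 5/6 := by linarith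
        have h3v : S 3 = 17/18 := by
          simp only [Hc] at HS3; split_ifs at HS3 <;> linarith
        rw [min_eq_right (h2lt.le.trans (le_max_left _ _)), h3v,
          max_eq_right (by norm_num : (1:ℝ)/3 ≤ 17/18)] at F2
        rcases le_total (S 2) (17/18) with h2s | h2s
        · rw [min_eq_right h2s] at F2; linarith
        · rw [min_eq_left h2s, Hc_1718] at F2
          have hH2 : Hc (S 2) = 4/3 := by linarith
          simp only [Hc] at hH2; split_ifs at hH2 <;> linarith [hS1le 2]
  rw [h0v] at F2 F3
  rw [max_eq_left (by norm_num : (1:ℝ)/3 ≤ 5/6)] at F2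
  rw [← max_assoc, max_eq_left (by norm_num : (1:ℝ)/3 ≤ 5/6)] at F3
  -- Step 3 (manipulated): S 3 > 5/6
  have h3gt : 5/6 < S 3 := by
    by_contra hc; push_neg at hc
    rw [min_eq_right (hc.trans (le_max_left _ _))] at F3
    rcases le_total (S 3) (1/3) with h3s | h3s
    · rw [min_eq_right h3s] at F3; linarith
    · rw [min_eq_left h3s, Hc_third] at F3
      have hb : Hc (S 3) ≤ 1/2 := by
        simp only [Hc]; split_ifs <;> linarith
      linarith
  rw [min_eq_left (by linarith : (1:ℝ)/3 ≤ S 3), Hc_third] at F3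
  -- Step 4 (manipulated): S 3 = 17/18, S 2 = 1
  have hS23 : S 2 = 1 ∧ S 3 = 17/18 := by
    rcases le_or_gt (S 3) (max (5/6 : ℝ) (S 2)) with h3m | h3m
    · rw [min_eq_right h3m] at F3
      have HS3 : Hc (S 3) = 5/6 := by linarith
      have h3v : S 3 = 17/18 := by
        simp only [Hc] at HS3; split_ifs at HS3 <;> linarith
      have h2ge : 17/18 ≤ S 2 := by
        rcases le_max_iff.1 (h3v ▸ h3m) with h | h
        · norm_num at h
        · exact h
      rw [h3v, max_eq_right (by norm_num : (1:ℝ)/3 ≤ 17/18),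
        min_eq_left h2ge, min_eq_left (by linarith : (5:ℝ)/6 ≤ S 2),
        Hc_56, Hc_1718] at F2
      have hH2 : Hc (S 2) = 3 * S 2 - 2 := by
        simp only [Hc]; split_ifs <;> linarith
      rw [hH2] at F2
      constructor
      · linarith
      · exact h3v
    · exfalso
      have h2lt : S 2 < S 3 := (le_max_right (5/6 : ℝ) _).trans_lt h3m
      rw [min_eq_right (h2lt.le.trans (le_max_right (1/3 : ℝ) _))] at F2
      rcases le_total (S 2) (5/6) with h2s | h2s
      · rw [min_eq_right h2s] at F2; linarith
      · rw [min_eq_left h2s, Hc_56] at F2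
        have hH2 : Hc (S 2) = 3 * S 2 - 2 := by
          simp only [Hc]; split_ifs <;> linarith
        rw [hH2] at F2
        linarith [hS1le 2]
  obtain ⟨h2v, h3v⟩ := hS23
  -- manipulated agent-0 values
  have b00 : aσ 0 0 = 1/2 := by
    rw [haS 0 0, sq00, h0v, h1v, min_eq_left (by norm_num : (1:ℝ)/3 ≤ 5/6),
      speeds0_integral]
    norm_num
  have b01 : aσ 0 1 = 1/3 := by
    rw [haS 0 1, sq01, min_eq_left (hS0 1), speeds0_integral, h1v]; norm_num
  have b02 : aσ 0 2 = 1/6 := by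
    rw [haS 0 2, sq02, h0v, h1v, h2v, max_eq_left (by norm_num : (1:ℝ)/3 ≤ 5/6),
      min_eq_left (by norm_num : (5:ℝ)/6 ≤ 1), speeds0_integral]
    norm_num
  have b03 : aσ 0 3 = 0 := by
    rw [haS 0 3, sq03, h0v, h1v, h2v, h3v,
      min_eq_right (by norm_num :
        (17:ℝ)/18 ≤ max (5/6) (max (1/3) 1)), speeds0_integral]
    norm_num
  -- assemble
  refine ⟨?_, ?_, ?_⟩
  · intro l
    fin_cases l <;>
      simp [a00, a01, a02, a03]
  · intro l
    fin_cases l <;>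
      simp [b00, b01, b02, b03]
  · refine ⟨1, ?_, ?_⟩
    · intro l hl
      have hl0 : l = 0 := by omega
      subst hl0
      simp [a00, b00]
    · simp only [Equiv.refl_apply, a01, b01]
      norm_num
end

section
/- In the SG mechanism with truthful bids, the allocation is equitable with respect to each agent's top 1 choice: the SG allocation a^π maximizes, over all feasible allocations a, the minimum over agents i of a_{iπ_i(1)}/r_i. -/
open Finset

/-- The Synchronized Greedy allocation with exhaustion times `T` under bids `σ`:
each agent consumes her most-preferred unexhausted good at constant rate `r i`
from time 0 to time 1, and each good `j` is fully consumed at time `T j`. -/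
def IsSGAllocT {n m : ℕ} (q : Fin m → ℝ) (r : Fin n → ℝ)
    (σ : Fin n → Equiv.Perm (Fin m)) (T : Fin m → ℝ)
    (a : Fin n → Fin m → ℝ) : Prop :=
  (∀ j, 0 ≤ T j ∧ T j ≤ 1) ∧
  (∀ i j, a i j = r i * max 0 (T j - startTime σ T i j)) ∧
  (∀ j, ∑ i, a i j = q j)

/-- `a` is the allocation produced by the SG mechanism under bids `σ`. -/
def IsSGAlloc {n m : ℕ} (q : Fin m → ℝ) (r : Fin n → ℝ)
    (σ : Fin n → Equiv.Perm (Fin m)) (a : Fin n → Fin m → ℝ) : Prop :=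
  ∃ T, IsSGAllocT q r σ T a

/-- The SG allocation under truthful bids is equitable w.r.t. each agent's top
choice: it maximizes, over all feasible allocations, the minimum over agents of
`a_{i π_i(1)} / r_i`. -/
theorem sg_equitable_top1 {n m : ℕ} (q : Fin (m + 1) → ℝ)
    (r : Fin (n + 1) → ℝ) (π : Fin (n + 1) → Equiv.Perm (Fin (m + 1)))
    (hq : ∀ j, 0 < q j) (hr : ∀ i, 0 < r i) (hsum : ∑ i, r i = ∑ j, q j)
    (aπ : Fin (n + 1) → Fin (m + 1) → ℝ)
    (hA : IsAlloc q r aπ) (hSG : IsSGAlloc q r π aπ) :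
    ∀ a, IsAlloc q r a →
      Finset.univ.inf' Finset.univ_nonempty
        (fun i : Fin (n + 1) => a i (π i 0) / r i) ≤
      Finset.univ.inf' Finset.univ_nonempty
        (fun i : Fin (n + 1) => aπ i (π i 0) / r i) := by
  obtain ⟨T, hTbd, haπ, hcol⟩ := hSG
  intro a ha
  -- top-good value under SG
  have htop : ∀ i, aπ i (π i 0) = r i * T (π i 0) := by
    intro i
    have hst : startTime π T i (π i 0) = 0 := by
      have : (Finset.univ.filter
          (fun j' => (π i).symm j' < (π i).symm (π i 0))) = ∅ := by
        apply Finset.filter_false_of_mem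
        intro j' _
        simp only [Equiv.symm_apply_apply]
        exact fun h => absurd h (Fin.not_lt_zero _)
      rw [startTime, this, Finset.fold_empty]
    rw [haπ i (π i 0), hst, sub_zero, max_eq_right (hTbd _).1]
  have hdiv : ∀ i, aπ i (π i 0) / r i = T (π i 0) := by
    intro i
    rw [htop i, mul_div_cancel_left₀ _ (hr i).ne']
  have hRHS : (Finset.univ.inf' Finset.univ_nonempty
      (fun i : Fin (n + 1) => aπ i (π i 0) / r i)) =
      Finset.univ.inf' Finset.univ_nonempty
      (fun i : Fin (n + 1) => T (π i 0)) := by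
    apply Finset.inf'_congr _ rfl
    intro i _; exact hdiv i
  rw [hRHS]
  -- the minimizer
  obtain ⟨i0, _, hi0⟩ := Finset.exists_mem_eq_inf' (Finset.univ_nonempty)
    (fun i : Fin (n + 1) => T (π i 0))
  set j0 := π i0 0 with hj0
  set M := T j0 with hM
  rw [hi0]
  have hMmin : ∀ i, M ≤ T (π i 0) := by
    intro i
    rw [← hi0]
    exact Finset.inf'_le _ (Finset.mem_univ i)
  set S := Finset.univ.filter (fun i : Fin (n + 1) => π i 0 = j0) with hS
  have hi0S : i0 ∈ S := by simp [hS, hj0]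
  -- off-S rows get 0 of j0
  have hzero : ∀ i, π i 0 ≠ j0 → aπ i j0 = 0 := by
    intro i hne
    have hstle : T (π i 0) ≤ startTime π T i j0 := by
      rw [startTime]
      rw [Finset.le_fold_max]
      right
      refine ⟨π i 0, ?_, le_rfl⟩
      simp only [Finset.mem_filter, Finset.mem_univ, true_and,
        Equiv.symm_apply_apply]
      have : (π i).symm j0 ≠ 0 := by
        intro h
        exact hne (by rw [← h, Equiv.apply_symm_apply])
      exact Fin.pos_of_ne_zero this
    have : T j0 - startTime π T i j0 ≤ 0 := by
      have := (hMmin i).trans hstle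
      linarith
    rw [haπ i j0, max_eq_left this, mul_zero]
  -- in-S rows get r i * M
  have honS : ∀ i ∈ S, aπ i j0 = r i * M := by
    intro i hiS
    have : π i 0 = j0 := by simpa [hS] using hiS
    rw [← this, htop i, this]
  -- q j0 = ∑ i in S, r i * M
  have hq0 : q j0 = ∑ i ∈ S, r i * M := by
    rw [← hcol j0]
    rw [← Finset.sum_filter_add_sum_filter_not Finset.univ
      (fun i : Fin (n + 1) => π i 0 = j0) (fun i => aπ i j0)]
    rw [Finset.sum_congr rfl honS]
    have : ∑ i ∈ Finset.univ.filter (fun i : Fin (n + 1) => ¬ π i 0 = j0),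
        aπ i j0 = 0 := by
      apply Finset.sum_eq_zero
      intro i hi
      exact hzero i (by simpa using (Finset.mem_filter.mp hi).2)
    rw [this, add_zero]
  -- for feasible a, ∑_{i∈S} a i j0 ≤ q j0
  have hsumle : ∑ i ∈ S, a i j0 ≤ ∑ i ∈ S, r i * M := by
    rw [← hq0, ← ha.2.2 j0]
    exact Finset.sum_le_sum_of_subset_of_nonneg (Finset.subset_univ S)
      (fun i _ _ => ha.1 i j0)
  obtain ⟨i1, hi1S, hi1⟩ := Finset.exists_le_of_sum_le ⟨i0, hi0S⟩ hsumle
  have hi1top : π i1 0 = j0 := by simpa [hS] using hi1S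
  calc Finset.univ.inf' Finset.univ_nonempty
        (fun i : Fin (n + 1) => a i (π i 0) / r i)
      ≤ a i1 (π i1 0) / r i1 := Finset.inf'_le _ (Finset.mem_univ i1)
    _ ≤ M := by
        rw [hi1top, div_le_iff₀ (hr i1), mul_comm]
        exact hi1
end
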